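/- Let (g_m) be a sequence of nonnegative functions on ℝ and let ε_m → 0 be such that for each compact K ⊂ (0,∞) there is c_K > 0 with min(g_m, c_K) → c_K uniformly on K. Suppose u_m: (0,t) → ℝ are measurable, u_m → u a.e. on (0,t), u ∈ L²((0,t)), and ess sup_{(0,t)} u > 0. Then exp(-(1/ε_m) ∫₀^t g_m(u_m(s)) ds) → 0 as m → ∞. -/

import Mathlib

open MeasureTheory Set Filter

/-- where the essential supremum of the limit temperature is positive, the
exponential factor exp(-(1/ε_m)∫₀ᵗ g_m(u_m)) tends to 0. -/
theorem stmt9 (g : ℕ → ℝ → ℝ) (ε : ℕ → ℝ)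
    (hεpos : ∀ m, 0 < ε m) (hε : Tendsto ε atTop (nhds 0))
    (hg : ∀ m z, 0 ≤ g m z)
    (hunif : ∀ K : Set ℝ, IsCompact K → K ⊆ Ioi 0 → ∃ c > (0:ℝ),
      TendstoUniformlyOn (fun m z => min (g m z) c) (fun _ => c) atTop K)
    (t : ℝ) (ht : 0 < t)
    (u : ℕ → ℝ → ℝ) (U : ℝ → ℝ)
    (hmeas : ∀ m, Measurable (u m))
    (hae : ∀ᵐ s ∂(volume.restrict (Ioo 0 t)),
      Tendsto (fun m => u m s) atTop (nhds (U s)))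
    (hU : MemLp U 2 (volume.restrict (Ioo 0 t)))
    (hess : ∃ lam > (0:ℝ), 0 < volume {s ∈ Ioo 0 t | lam ≤ U s})
    (hint : ∀ m, IntervalIntegrable (fun s => g m (u m s)) volume 0 t) :
    Tendsto (fun m => Real.exp (-(1/ε m) * ∫ s in (0:ℝ)..t, g m (u m s)))
      atTop (nhds 0) := by
  obtain ⟨lam, hlam, hEpos⟩ := hess
  -- measurable representative of U
  set μr := volume.restrict (Ioo (0:ℝ) t) with hμr
  have hUm := hU.aestronglyMeasurable
  set V : ℝ → ℝ := hUm.mk U with hV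
  have hVsm : StronglyMeasurable V := hUm.stronglyMeasurable_mk
  have hVmeas : Measurable V := hVsm.measurable
  -- good a.e. property
  have hQ : ∀ᵐ s ∂μr, Tendsto (fun m => u m s) atTop (nhds (U s)) ∧ U s = V s :=
    hae.and hUm.ae_eq_mk
  set N : Set ℝ := toMeasurable μr {s | ¬ (Tendsto (fun m => u m s) atTop (nhds (U s)) ∧ U s = V s)} with hN
  have hNmeas : MeasurableSet N := measurableSet_toMeasurable _ _
  have hNnull : μr N = 0 := by
    rw [measure_toMeasurable]
    exact hQ
  have hNvol : volume (N ∩ Ioo 0 t) = 0 := by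
    rw [← Measure.restrict_apply hNmeas]
    exact hNnull
  have hgood : ∀ s, s ∉ N → Tendsto (fun m => u m s) atTop (nhds (U s)) ∧ U s = V s := by
    intro s hs
    by_contra h
    exact hs (subset_toMeasurable _ _ h)
  -- find M with positive measure of {lam ≤ V ≤ M} inside Ioo 0 t
  have hEV : 0 < volume (Ioo 0 t ∩ {s | lam ≤ V s}) := by
    have hsub : {s ∈ Ioo 0 t | lam ≤ U s} ⊆ (Ioo 0 t ∩ {s | lam ≤ V s}) ∪ (N ∩ Ioo 0 t) := by
      intro s hs
      by_cases hsN : s ∈ N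
      · exact Or.inr ⟨hsN, hs.1⟩
      · exact Or.inl ⟨hs.1, show lam ≤ V s from (hgood s hsN).2 ▸ hs.2⟩
    have : volume {s | s ∈ Ioo 0 t ∧ lam ≤ U s} ≤ volume ((Ioo 0 t ∩ {s | lam ≤ V s})) + volume (N ∩ Ioo 0 t) := (measure_mono hsub).trans (measure_union_le _ _)
    rw [hNvol, add_zero] at this
    exact lt_of_lt_of_le hEpos this
  obtain ⟨M, hM⟩ : ∃ M : ℕ, 0 < volume (Ioo 0 t ∩ {s | lam ≤ V s ∧ V s ≤ M}) := by
    by_contra h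
    push_neg at h
    simp only [le_zero_iff] at h
    have hU0 : volume (⋃ n : ℕ, Ioo 0 t ∩ {s | lam ≤ V s ∧ V s ≤ n}) = 0 := by
      refine le_antisymm ((measure_iUnion_le _).trans ?_) zero_le
      simp [h]
    have : Ioo 0 t ∩ {s | lam ≤ V s} ⊆ ⋃ n : ℕ, Ioo 0 t ∩ {s | lam ≤ V s ∧ V s ≤ n} := by
      intro s hs
      obtain ⟨n, hn⟩ := exists_nat_ge (V s)
      exact mem_iUnion.2 ⟨n, hs.1, hs.2, hn⟩
    exact hEV.ne' (le_antisymm ((measure_mono this).trans hU0.le) zero_le)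
  -- the set S where everything is nice
  set S : Set ℝ := (Ioo 0 t ∩ {s | lam ≤ V s ∧ V s ≤ M}) \ N with hS
  have hSmeas : MeasurableSet S := by
    refine (measurableSet_Ioo.inter ?_).diff hNmeas
    exact (measurableSet_le measurable_const hVmeas).inter (measurableSet_le hVmeas measurable_const)
  have hSsub : S ⊆ Ioo 0 t := fun s hs => hs.1.1
  have hSpos : 0 < volume S := by
    have : (Ioo 0 t ∩ {s | lam ≤ V s ∧ V s ≤ M}) ⊆ S ∪ (N ∩ Ioo 0 t) := by
      intro s hs
      by_cases hsN : s ∈ N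
      · exact Or.inr ⟨hsN, hs.1⟩
      · exact Or.inl ⟨hs, hsN⟩
    have h2 : volume (Ioo 0 t ∩ {s | lam ≤ V s ∧ V s ≤ M}) ≤ volume S + volume (N ∩ Ioo 0 t) := (measure_mono this).trans (measure_union_le _ _)
    rw [hNvol, add_zero] at h2
    exact lt_of_lt_of_le hM h2
  have hSfin : volume S ≠ ⊤ := by
    refine ne_top_of_le_ne_top ?_ (measure_mono hSsub)
    simp [Real.volume_Ioo]
  -- Egorov
  have hconv : ∀ᵐ x ∂volume, x ∈ S → Tendsto (fun m => u m x) atTop (nhds (V x)) := by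
    refine .of_forall fun x hx => ?_
    obtain ⟨h1, h2⟩ := hgood x hx.2
    rwa [h2] at h1
  have hεS : (0:ℝ) < (volume S).toReal / 2 := by
    have := ENNReal.toReal_pos hSpos.ne' hSfin
    linarith
  obtain ⟨T, hTS, hTmeas, hTle, hTunif⟩ :=
    tendstoUniformlyOn_of_ae_tendsto (fun m => (hmeas m).stronglyMeasurable) hVsm hSmeas hSfin
      hconv hεS
  set F : Set ℝ := S \ T with hF
  have hFmeas : MeasurableSet F := hSmeas.diff hTmeas
  have hFsub : F ⊆ Ioo 0 t := fun s hs => hSsub hs.1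
  have hFfin : volume F ≠ ⊤ := ne_top_of_le_ne_top hSfin (measure_mono (diff_subset))
  have hFpos : 0 < volume F := by
    by_contra h
    push_neg at h
    have hF0 : volume F = 0 := le_antisymm h zero_le
    have : volume S ≤ volume T := by
      calc volume S ≤ volume (F ∪ T) := measure_mono (fun s hs => by
            by_cases hT : s ∈ T
            · exact Or.inr hT
            · exact Or.inl ⟨hs, hT⟩)
        _ ≤ volume F + volume T := measure_union_le _ _
        _ = volume T := by rw [hF0, zero_add]
    have hhalf : volume T ≤ ENNReal.ofReal ((volume S).toReal / 2) := hTle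
    have h2 : volume S ≤ ENNReal.ofReal ((volume S).toReal / 2) := this.trans hhalf
    rw [ENNReal.ofReal_div_of_pos (by norm_num), ENNReal.ofReal_toReal hSfin] at h2
    have : volume S / 2 < volume S := ENNReal.half_lt_self hSpos.ne' hSfin
    have h3 : ENNReal.ofReal 2 = 2 := by norm_num
    rw [h3] at h2
    exact absurd h2 (not_le.2 this)
  -- compact set and uniform positivity of g
  set K : Set ℝ := Icc (lam/2) (M+1) with hK
  obtain ⟨c, hc, hcunif⟩ := hunif K isCompact_Icc (fun z hz => lt_of_lt_of_le (by linarith) hz.1)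
  -- eventually g m (u m s) ≥ c/2 on F
  have hev : ∀ᶠ m in atTop, ∀ s ∈ F, c/2 ≤ g m (u m s) := by
    have h1 := hTunif
    rw [Metric.tendstoUniformlyOn_iff] at h1 hcunif
    have hη : (0:ℝ) < min (lam/2) 1 := by
      apply lt_min (by linarith) one_pos
    filter_upwards [h1 (min (lam/2) 1) hη, hcunif (c/2) (by linarith)] with m hm1 hm2 s hsF
    have hsS : s ∈ S := hsF.1
    have hVmem : lam ≤ V s ∧ V s ≤ M := hsS.1.2
    have hd := hm1 s hsF
    rw [Real.dist_eq] at hd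
    have hd' := abs_lt.1 hd
    have humem : u m s ∈ K := by
      constructor
      · have : min (lam/2) 1 ≤ lam/2 := min_le_left _ _
        nlinarith [hVmem.1]
      · have : min (lam/2) 1 ≤ 1 := min_le_right _ _
        nlinarith [hVmem.2]
    have := hm2 (u m s) humem
    rw [Real.dist_eq] at this
    have h4 := abs_lt.1 this
    have : c/2 < min (g m (u m s)) c := by linarith
    exact le_of_lt (lt_of_lt_of_le this (min_le_left _ _))
  -- integral lower bound eventually
  set δ : ℝ := c/2 * (volume F).toReal with hδ
  have hδpos : 0 < δ := by
    apply mul_pos (by linarith)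
    exact ENNReal.toReal_pos hFpos.ne' hFfin
  have hintlb : ∀ᶠ m in atTop, δ ≤ ∫ s in (0:ℝ)..t, g m (u m s) := by
    filter_upwards [hev] with m hm
    have hIoc : IntegrableOn (fun s => g m (u m s)) (Ioc 0 t) volume := (hint m).1
    have h1 : δ ≤ ∫ s in F, g m (u m s) :=
      by have h := setIntegral_ge_of_const_le hFmeas hFfin hm (hIoc.mono_set (hFsub.trans Ioo_subset_Ioc_self)); rw [smul_eq_mul, mul_comm] at h; exact h
    have h2 : ∫ s in F, g m (u m s) ≤ ∫ s in Ioc 0 t, g m (u m s) := by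
      refine setIntegral_mono_set hIoc (.of_forall fun s => hg m _) ?_
      exact HasSubset.Subset.eventuallyLE (hFsub.trans Ioo_subset_Ioc_self)
    rw [intervalIntegral.integral_of_le ht.le]
    linarith
  -- conclude
  have hinv : Tendsto (fun m => δ / ε m) atTop atTop := by
    have hε' : Tendsto ε atTop (nhdsWithin 0 (Ioi 0)) :=
      tendsto_nhdsWithin_of_tendsto_nhds_of_eventually_within _ hε (.of_forall fun m => hεpos m)
    have := hε'.inv_tendsto_nhdsGT_zero
    simpa [div_eq_mul_inv] using this.const_mul_atTop hδpos
  have hbot : Tendsto (fun m => -(δ / ε m)) atTop atBot := tendsto_neg_atTop_atBot.comp hinv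
  have hexp : Tendsto (fun m => Real.exp (-(δ / ε m))) atTop (nhds 0) :=
    Real.tendsto_exp_atBot.comp hbot
  refine tendsto_of_tendsto_of_tendsto_of_le_of_le' tendsto_const_nhds hexp
    (.of_forall fun m => (Real.exp_pos _).le) ?_
  filter_upwards [hintlb] with m hm
  apply Real.exp_le_exp.2
  have h1 : (0:ℝ) < 1 / ε m := by have := hεpos m; positivity
  have : (1/ε m) * δ ≤ (1/ε m) * ∫ s in (0:ℝ)..t, g m (u m s) := by
    exact mul_le_mul_of_nonneg_left hm h1.le
  have h2 : δ / ε m = (1/ε m) * δ := by ring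
  linarith [this, h2 ▸ le_refl (δ / ε m)]
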